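/- Let θ be a partial action of an inverse semigroupoid S on X and let ≈ be the equivalence relation on D = {(s,x) : x ∈ X_{s*s}} generated by the relation ∼. If (s,x) ≈ (t,y), then x ∈ X_{s*} if and only if y ∈ X_{t*}; and when both memberships hold, θ_s(x) = θ_t(y). -/
import Mathlib


structure InvSgpd (S : Type*) (O : Type*) where
  d : S → O
  c : S → O
  mul : S → S → S
  d_mul : ∀ s t, d s = c t → d (mul s t) = d t
  c_mul : ∀ s t, d s = c t → c (mul s t) = c s
  assoc : ∀ p s t, d p = c s → d s = c t → mul (mul p s) t = mul p (mul s t)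
  inv : S → S
  comp_inv : ∀ s, d s = c (inv s)
  inv_comp : ∀ s, d (inv s) = c s
  mul_inv_mul : ∀ s, mul (mul s (inv s)) s = s
  inv_mul_inv : ∀ s, mul (mul (inv s) s) (inv s) = inv s
  inv_unique : ∀ s t, d s = c t → d t = c s →
    mul (mul s t) s = s → mul (mul t s) t = t → t = inv s

namespace InvSgpd
variable {S O : Type*} (G : InvSgpd S O)
def Composable (s t : S) : Prop := G.d s = G.c t
def Idem (e : S) : Prop := G.Composable e e ∧ G.mul e e = e
def le (s t : S) : Prop :=
  G.d s = G.d t ∧ G.c s = G.c t ∧ s = G.mul t (G.mul (G.inv s) s)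
end InvSgpd

/-- A partial action of an inverse semigroupoid `G` on a set (type) `X`:
`dom s` plays the role of `X_s` and `act s` the role of `θ_s : X_{s*} → X_s`
(as a total map whose values are only relevant on `dom (G.inv s)`). -/
structure PAction {S O : Type*} (G : InvSgpd S O) (X : Type*) where
  dom : S → Set X
  act : S → X → X
  maps : ∀ s, ∀ x ∈ dom (G.inv s), act s x ∈ dom s
  /-- (P1) `θ_e = id_{X_e}` for idempotents. -/
  idem_id : ∀ e, G.Idem e → ∀ x ∈ dom e, act e x = x
  /-- (P1) every point lies in some `X_e` with `e` idempotent. -/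
  cover : ∀ x : X, ∃ e, G.Idem e ∧ x ∈ dom e
  /-- (P2) `X_s ⊆ X_{ss*}`. -/
  dom_mono : ∀ s, dom s ⊆ dom (G.mul s (G.inv s))
  /-- (P3) `θ_t⁻¹(X_t ∩ X_{s*}) = X_{(st)*} ∩ X_{t*}` for composable `(s,t)`. -/
  preimage_eq : ∀ s t, G.Composable s t →
    {x | x ∈ dom (G.inv t) ∧ act t x ∈ dom t ∩ dom (G.inv s)}
      = dom (G.inv (G.mul s t)) ∩ dom (G.inv t)
  /-- (P3) `θ_s (θ_t x) = θ_{st} x` on `X_{(st)*} ∩ X_{t*}`. -/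
  mul_act : ∀ s t, G.Composable s t →
    ∀ x ∈ dom (G.inv (G.mul s t)) ∩ dom (G.inv t),
      act s (act t x) = act (G.mul s t) x

namespace PAction
variable {S O X : Type*} {G : InvSgpd S O}

/-- A partial action is global when `X_s = X_{ss*}` for every `s`. -/
def IsGlobal (θ : PAction G X) : Prop := ∀ s, θ.dom s = θ.dom (G.mul s (G.inv s))

end PAction

namespace PAction
variable {S O X : Type*} {G : InvSgpd S O} (θ : PAction G X)

/-- The set `D = {(s,x) ∈ S × X : x ∈ X_{s*s}}`. -/
def Dset : Type _ := {p : S × X // p.2 ∈ θ.dom (G.mul (G.inv p.1) p.1)}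

/-- The relation `∼` on `D`: `(s,x) ∼ (t,y)` iff
(R1) `(t*,s)` is composable, `x ∈ X_{s*t}` and `θ_{t*s}(x) = y`, or
(R2) `s` and `t` are idempotents and `x = y`. -/
def rel (p q : θ.Dset) : Prop :=
  (G.Composable (G.inv q.1.1) p.1.1 ∧
      p.1.2 ∈ θ.dom (G.mul (G.inv p.1.1) q.1.1) ∧
      θ.act (G.mul (G.inv q.1.1) p.1.1) p.1.2 = q.1.2) ∨
    (G.Idem p.1.1 ∧ G.Idem q.1.1 ∧ p.1.2 = q.1.2)

end PAction


section AuxSemigroup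

private lemma abs_prod_idem {M : Type*} [Semigroup M] (i : M → M)
    (h1 : ∀ a, a * i a * a = a) (h2 : ∀ a, i a * a * i a = i a)
    (h3 : ∀ a b, a * b * a = a → b * a * b = b → b = i a)
    (e f : M) (he : e * e = e) (hf : f * f = f) : (e * f) * (e * f) = e * f := by
  have self_inv : ∀ g : M, g * g = g → i g = g := fun g hg =>
    (h3 g g (by rw [hg, hg]) (by rw [hg, hg])).symm
  set x := i (e * f) with hx
  have hfr : ∀ z : M, f * (f * z) = f * z := fun z => by rw [← mul_assoc, hf]
  have her : ∀ z : M, e * (e * z) = e * z := fun z => by rw [← mul_assoc, he]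
  have hx2 : x * (e * f) * x = x := h2 (e * f)
  have hxr : ∀ z : M, x * (e * (f * (x * z))) = x * z := fun z => by
    calc x * (e * (f * (x * z))) = (x * (e * f) * x) * z := by simp [mul_assoc]
    _ = x * z := by rw [hx2]
  have hA : (e * f) * (f * x * e) * (e * f) = e * f := by
    have h1' := h1 (e * f)
    calc (e * f) * (f * x * e) * (e * f)
        = e * (f * (f * (x * (e * (e * f))))) := by simp [mul_assoc]
      _ = e * (f * (x * (e * f))) := by rw [hfr, her]
      _ = e * f := by simpa [mul_assoc] using h1'
  have hB : (f * x * e) * (e * f) * (f * x * e) = f * x * e := by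
    calc (f * x * e) * (e * f) * (f * x * e)
        = f * (x * (e * (e * (f * (f * (x * e)))))) := by simp [mul_assoc]
      _ = f * (x * (e * (f * (x * e)))) := by rw [hfr, her]
      _ = f * (x * e) := by rw [hxr]
      _ = f * x * e := (mul_assoc f x e).symm
  have hfxe : f * x * e = x := (h3 (e * f) (f * x * e) hA hB).trans hx.symm
  have hxx : x * x = x := by
    have key : (f * x * e) * (f * x * e) = f * x * e := by
      calc (f * x * e) * (f * x * e)
          = f * (x * (e * (f * (x * e)))) := by simp [mul_assoc]
        _ = f * (x * e) := by rw [hxr]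
        _ = f * x * e := (mul_assoc f x e).symm
    rwa [hfxe] at key
  have hef_x : e * f = x := by
    have h := h3 x (e * f) (hx ▸ hx2) (hx ▸ h1 (e * f))
    rw [h, self_inv x hxx]
  rw [hef_x]; exact hxx

private lemma abs_idem_comm {M : Type*} [Semigroup M] (i : M → M)
    (h1 : ∀ a, a * i a * a = a) (h2 : ∀ a, i a * a * i a = i a)
    (h3 : ∀ a b, a * b * a = a → b * a * b = b → b = i a)
    (e f : M) (he : e * e = e) (hf : f * f = f) : e * f = f * e := by
  have self_inv : ∀ g : M, g * g = g → i g = g := fun g hg =>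
    (h3 g g (by rw [hg, hg]) (by rw [hg, hg])).symm
  have hfr : ∀ z : M, f * (f * z) = f * z := fun z => by rw [← mul_assoc, hf]
  have her : ∀ z : M, e * (e * z) = e * z := fun z => by rw [← mul_assoc, he]
  have hef : (e * f) * (e * f) = e * f := abs_prod_idem i h1 h2 h3 e f he hf
  have hfe : (f * e) * (f * e) = f * e := abs_prod_idem i h1 h2 h3 f e hf he
  have hA : (e * f) * (f * e) * (e * f) = e * f := by
    calc (e * f) * (f * e) * (e * f)
        = e * (f * (f * (e * (e * f)))) := by simp [mul_assoc]
      _ = e * (f * (e * (e * f))) := by rw [hfr]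
      _ = e * (f * (e * f)) := by rw [her]
      _ = (e * f) * (e * f) := by simp [mul_assoc]
      _ = e * f := hef
  have hB : (f * e) * (e * f) * (f * e) = f * e := by
    calc (f * e) * (e * f) * (f * e)
        = f * (e * (e * (f * (f * e)))) := by simp [mul_assoc]
      _ = f * (e * (f * (f * e))) := by rw [her]
      _ = f * (e * (f * e)) := by rw [hfr]
      _ = (f * e) * (f * e) := by simp [mul_assoc]
      _ = f * e := hfe
  have h := h3 (e * f) (f * e) hA hB
  rw [h, self_inv (e * f) hef]

end AuxSemigroup

namespace InvSgpd
variable {S O : Type*} (G : InvSgpd S O)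

lemma inv_inv (s : S) : G.inv (G.inv s) = s :=
  (G.inv_unique (G.inv s) s (G.inv_comp s) (G.comp_inv s)
    (G.inv_mul_inv s) (G.mul_inv_mul s)).symm

lemma idem_inv {e : S} (he : G.Idem e) : G.inv e = e :=
  (G.inv_unique e e he.1 he.1 (by rw [he.2, he.2]) (by rw [he.2, he.2])).symm

lemma idem_inv_mul (s : S) : G.Idem (G.mul (G.inv s) s) := by
  have hd : G.d (G.mul (G.inv s) s) = G.d s := G.d_mul _ _ (G.inv_comp s)
  have hc : G.c (G.mul (G.inv s) s) = G.d s :=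
    (G.c_mul _ _ (G.inv_comp s)).trans (G.comp_inv s).symm
  refine ⟨hd.trans hc.symm, ?_⟩
  rw [G.assoc (G.inv s) s (G.mul (G.inv s) s) (G.inv_comp s) hc.symm,
    ← G.assoc s (G.inv s) s (G.comp_inv s) (G.inv_comp s), G.mul_inv_mul]

lemma idem_mul_inv (s : S) : G.Idem (G.mul s (G.inv s)) := by
  have := G.idem_inv_mul (G.inv s)
  rwa [G.inv_inv] at this

lemma idem_comm {e f : S} (he : G.Idem e) (hf : G.Idem f) (h : G.d e = G.c f) :
    G.mul e f = G.mul f e := by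
  have hce : G.c e = G.d e := he.1.symm
  have hdf : G.d f = G.c f := hf.1
  set o := G.d e with ho
  have hfo : G.d f = o ∧ G.c f = o := ⟨hdf.trans h.symm, h.symm⟩
  have heo : G.d e = o ∧ G.c e = o := ⟨rfl, hce⟩
  letI : Semigroup {a : S // G.d a = o ∧ G.c a = o} :=
    { mul := fun a b => ⟨G.mul a.1 b.1,
        (G.d_mul a.1 b.1 (a.2.1.trans b.2.2.symm)).trans b.2.1,
        (G.c_mul a.1 b.1 (a.2.1.trans b.2.2.symm)).trans a.2.2⟩
      mul_assoc := fun a b c => Subtype.ext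
        (G.assoc a.1 b.1 c.1 (a.2.1.trans b.2.2.symm) (b.2.1.trans c.2.2.symm)) }
  let i : {a : S // G.d a = o ∧ G.c a = o} → {a : S // G.d a = o ∧ G.c a = o} :=
    fun a => ⟨G.inv a.1, (G.inv_comp a.1).trans a.2.2, (G.comp_inv a.1).symm.trans a.2.1⟩
  have h1 : ∀ a, a * i a * a = a := fun a => Subtype.ext (G.mul_inv_mul a.1)
  have h2 : ∀ a, i a * a * i a = i a := fun a => Subtype.ext (G.inv_mul_inv a.1)
  have h3 : ∀ a b, a * b * a = a → b * a * b = b → b = i a := fun a b hab hba =>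
    Subtype.ext (G.inv_unique a.1 b.1 (a.2.1.trans b.2.2.symm) (b.2.1.trans a.2.2.symm)
      (congrArg Subtype.val hab) (congrArg Subtype.val hba))
  have key := abs_idem_comm i h1 h2 h3 ⟨e, heo⟩ ⟨f, hfo⟩
    (Subtype.ext he.2) (Subtype.ext hf.2)
  exact congrArg Subtype.val key

lemma sandwich {s t : S} (hst : G.d s = G.c t) :
    G.mul (G.mul (G.mul s t) (G.mul (G.inv t) (G.inv s))) (G.mul s t) = G.mul s t := by
  have hdt : G.d (G.inv t) = G.c t := G.inv_comp t
  have hct' : G.d t = G.c (G.inv t) := G.comp_inv t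
  have hds' : G.d s = G.c (G.inv s) := G.comp_inv s
  have hs'c : G.d (G.inv s) = G.c s := G.inv_comp s
  have h_ts : G.d (G.inv t) = G.c (G.inv s) := hdt.trans (hst.symm.trans hds')
  set e := G.mul t (G.inv t) with hedef
  set f := G.mul (G.inv s) s with hfdef
  have he : G.Idem e := G.idem_mul_inv t
  have hf : G.Idem f := G.idem_inv_mul s
  have hde : G.d e = G.c t := (G.d_mul t (G.inv t) hct').trans hdt
  have hce : G.c e = G.c t := G.c_mul t (G.inv t) hct'
  have hdff : G.d f = G.d s := G.d_mul (G.inv s) s hs'c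
  have hcf : G.c f = G.d s := (G.c_mul (G.inv s) s hs'c).trans hds'.symm
  have hcomm : G.mul e f = G.mul f e :=
    G.idem_comm he hf (hde.trans (hst.symm.trans hcf.symm))
  have hcst : G.c (G.mul s t) = G.c s := G.c_mul s t hst
  have hdes : G.d e = G.c (G.inv s) := hde.trans (hst.symm.trans hds')
  have a1 : G.mul (G.mul s t) (G.mul (G.inv t) (G.inv s))
      = G.mul s (G.mul t (G.mul (G.inv t) (G.inv s))) :=
    G.assoc s t _ hst (hct'.trans (G.c_mul (G.inv t) (G.inv s) h_ts).symm)
  have a2 : G.mul t (G.mul (G.inv t) (G.inv s)) = G.mul e (G.inv s) := by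
    rw [hedef]; exact (G.assoc t (G.inv t) (G.inv s) hct' h_ts).symm
  have hcems : G.c (G.mul e (G.inv s)) = G.c t := (G.c_mul e (G.inv s) hdes).trans hce
  have hdems : G.d (G.mul e (G.inv s)) = G.c s := (G.d_mul e (G.inv s) hdes).trans hs'c
  have a3 : G.mul (G.mul s (G.mul e (G.inv s))) (G.mul s t)
      = G.mul s (G.mul (G.mul e (G.inv s)) (G.mul s t)) :=
    G.assoc s (G.mul e (G.inv s)) (G.mul s t) (hst.trans hcems.symm)
      (hdems.trans hcst.symm)
  have a4 : G.mul (G.mul e (G.inv s)) (G.mul s t)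
      = G.mul e (G.mul (G.inv s) (G.mul s t)) :=
    G.assoc e (G.inv s) (G.mul s t) hdes (hs'c.trans hcst.symm)
  have a5 : G.mul (G.inv s) (G.mul s t) = G.mul f t := by
    rw [hfdef]; exact (G.assoc (G.inv s) s t hs'c hst).symm
  have a6 : G.mul e (G.mul f t) = G.mul (G.mul e f) t :=
    (G.assoc e f t (hde.trans (hst.symm.trans hcf.symm)) (hdff.trans hst)).symm
  have a8 : G.mul (G.mul f e) t = G.mul f (G.mul e t) :=
    G.assoc f e t (hdff.trans (hst.trans hce.symm)) hde
  have a9 : G.mul e t = t := by rw [hedef]; exact G.mul_inv_mul t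
  have a10 : G.mul f t = G.mul (G.inv s) (G.mul s t) := a5.symm
  have a11 : G.mul s (G.mul (G.inv s) (G.mul s t))
      = G.mul (G.mul s (G.inv s)) (G.mul s t) :=
    (G.assoc s (G.inv s) (G.mul s t) hds' (hs'c.trans hcst.symm)).symm
  have a12 : G.mul (G.mul s (G.inv s)) (G.mul s t)
      = G.mul (G.mul (G.mul s (G.inv s)) s) t :=
    (G.assoc (G.mul s (G.inv s)) s t
      ((G.d_mul s (G.inv s) hds').trans hs'c) hst).symm
  rw [a1, a2, a3, a4, a5, a6, hcomm, a8, a9, a10, a11, a12, G.mul_inv_mul]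

lemma inv_mul {s t : S} (hst : G.d s = G.c t) :
    G.inv (G.mul s t) = G.mul (G.inv t) (G.inv s) := by
  have h_ts : G.d (G.inv t) = G.c (G.inv s) :=
    (G.inv_comp t).trans (hst.symm.trans (G.comp_inv s))
  refine (G.inv_unique (G.mul s t) (G.mul (G.inv t) (G.inv s)) ?_ ?_ ?_ ?_).symm
  · exact (G.d_mul s t hst).trans ((G.c_mul (G.inv t) (G.inv s) h_ts).trans
      (G.comp_inv t).symm).symm
  · exact (G.d_mul (G.inv t) (G.inv s) h_ts).trans
      ((G.inv_comp s).trans (G.c_mul s t hst).symm)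
  · exact G.sandwich hst
  · have h := G.sandwich h_ts
    rwa [G.inv_inv, G.inv_inv] at h

end InvSgpd

namespace PAction
variable {S O X : Type*} {G : InvSgpd S O} (θ : PAction G X)

lemma mem_dom_inv_mul {s : S} {x : X} (hx : x ∈ θ.dom (G.inv s)) :
    x ∈ θ.dom (G.mul (G.inv s) s) := by
  have := θ.dom_mono (G.inv s) hx
  rwa [G.inv_inv] at this

lemma act_inv_act {s : S} {x : X} (hx : x ∈ θ.dom (G.inv s)) :
    θ.act (G.inv s) (θ.act s x) = x := by
  have hidem : G.Idem (G.mul (G.inv s) s) := G.idem_inv_mul s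
  have hx2 : x ∈ θ.dom (G.inv (G.mul (G.inv s) s)) := by
    rw [G.idem_inv hidem]; exact θ.mem_dom_inv_mul hx
  have hkey := θ.mul_act (G.inv s) s (G.inv_comp s) x ⟨hx2, hx⟩
  rw [hkey]
  exact θ.idem_id _ hidem x (θ.mem_dom_inv_mul hx)

lemma act_act_inv {s : S} {x : X} (hx : x ∈ θ.dom s) :
    θ.act s (θ.act (G.inv s) x) = x := by
  have hx' : x ∈ θ.dom (G.inv (G.inv s)) := by rwa [G.inv_inv]
  have := θ.act_inv_act hx'
  rwa [G.inv_inv] at this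

lemma step (p q : θ.Dset) (h : θ.rel p q) (hp : p.1.2 ∈ θ.dom (G.inv p.1.1)) :
    q.1.2 ∈ θ.dom (G.inv q.1.1) ∧ θ.act p.1.1 p.1.2 = θ.act q.1.1 q.1.2 := by
  obtain ⟨hc, hx2, hact⟩ | ⟨he, hf, hxy⟩ := h
  · have hinv : G.inv (G.mul (G.inv q.1.1) p.1.1) = G.mul (G.inv p.1.1) q.1.1 := by
      rw [G.inv_mul hc, G.inv_inv]
    have hxdom : p.1.2 ∈ θ.dom (G.inv (G.mul (G.inv q.1.1) p.1.1)) := by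
      rw [hinv]; exact hx2
    have hmem : p.1.2 ∈ θ.dom (G.inv p.1.1) ∧
        θ.act p.1.1 p.1.2 ∈ θ.dom p.1.1 ∩ θ.dom (G.inv (G.inv q.1.1)) := by
      have hx' : p.1.2 ∈ θ.dom (G.inv (G.mul (G.inv q.1.1) p.1.1)) ∩ θ.dom (G.inv p.1.1) :=
        ⟨hxdom, hp⟩
      rw [← θ.preimage_eq (G.inv q.1.1) p.1.1 hc] at hx'
      exact hx'
    have hsx_t : θ.act p.1.1 p.1.2 ∈ θ.dom q.1.1 := by
      have := hmem.2.2; rwa [G.inv_inv] at this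
    have hy_eq : θ.act (G.inv q.1.1) (θ.act p.1.1 p.1.2) = q.1.2 := by
      rw [θ.mul_act (G.inv q.1.1) p.1.1 hc p.1.2 ⟨hxdom, hp⟩]; exact hact
    constructor
    · rw [← hy_eq]
      exact θ.maps (G.inv q.1.1) (θ.act p.1.1 p.1.2) (by rwa [G.inv_inv])
    · rw [← hy_eq, θ.act_act_inv hsx_t]
  · constructor
    · rw [G.idem_inv hf]
      have hq := q.2
      rwa [G.idem_inv hf, hf.2] at hq
    · have hpmem : p.1.2 ∈ θ.dom p.1.1 := by
        have hp2 := p.2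
        rwa [G.idem_inv he, he.2] at hp2
      have hqmem : q.1.2 ∈ θ.dom q.1.1 := by
        have hq2 := q.2
        rwa [G.idem_inv hf, hf.2] at hq2
      rw [θ.idem_id _ he _ hpmem, θ.idem_id _ hf _ hqmem]
      exact hxy

lemma rel_symm (p q : θ.Dset) (h : θ.rel p q) : θ.rel q p := by
  obtain ⟨hc, hx2, hact⟩ | ⟨he, hf, hxy⟩ := h
  · left
    have hctc : G.c q.1.1 = G.c p.1.1 := (G.inv_comp q.1.1).symm.trans hc
    have hinv : G.inv (G.mul (G.inv q.1.1) p.1.1) = G.mul (G.inv p.1.1) q.1.1 := by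
      rw [G.inv_mul hc, G.inv_inv]
    have hxdom : p.1.2 ∈ θ.dom (G.inv (G.mul (G.inv q.1.1) p.1.1)) := by
      rw [hinv]; exact hx2
    refine ⟨(G.inv_comp p.1.1).trans hctc.symm, ?_, ?_⟩
    · rw [← hact]
      exact θ.maps _ _ hxdom
    · rw [← hact, ← hinv]
      exact θ.act_inv_act hxdom
  · exact Or.inr ⟨hf, he, hxy.symm⟩

end PAction

/-- If `(s,x) ≈ (t,y)` (the equivalence generated by `∼`), then
`x ∈ X_{s*}` iff `y ∈ X_{t*}`, and in that case `θ_s(x) = θ_t(y)`. -/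
theorem eqvGen_act_eq {S O X : Type*} (G : InvSgpd S O) (θ : PAction G X)
    (p q : θ.Dset) (h : Relation.EqvGen θ.rel p q) :
    (p.1.2 ∈ θ.dom (G.inv p.1.1) ↔ q.1.2 ∈ θ.dom (G.inv q.1.1)) ∧
      (p.1.2 ∈ θ.dom (G.inv p.1.1) → q.1.2 ∈ θ.dom (G.inv q.1.1) →
        θ.act p.1.1 p.1.2 = θ.act q.1.1 q.1.2) := by
  induction h with
  | rel p q hpq =>
      exact ⟨⟨fun hp => (θ.step p q hpq hp).1, fun hq => (θ.step q p (θ.rel_symm p q hpq) hq).1⟩,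
        fun hp _ => (θ.step p q hpq hp).2⟩
  | refl p => exact ⟨Iff.rfl, fun _ _ => rfl⟩
  | symm a b _ ih => exact ⟨ih.1.symm, fun hq hp => (ih.2 hp hq).symm⟩
  | trans a b c _ _ ih1 ih2 =>
      refine ⟨ih1.1.trans ih2.1, fun hp hr => ?_⟩
      have hq := ih1.1.mp hp
      exact (ih1.2 hp hq).trans (ih2.2 hq hr)
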